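/- If φ/(2π) is rational and cos φ is rational, then cos φ ∈ {0, 1/2, -1/2, 1, -1} (Niven's theorem). -/

import Mathlib

open Real

namespace NivenPort

/-- Niven's theorem: if φ/(2π) is rational and cos φ is rational, then
cos φ ∈ {0, 1/2, -1/2, 1, -1}. -/
theorem niven (φ : ℝ) (h1 : ∃ q : ℚ, φ / (2 * π) = (q : ℝ))
    (h2 : ∃ q : ℚ, Real.cos φ = (q : ℝ)) :
    Real.cos φ ∈ ({0, 1/2, -1/2, 1, -1} : Set ℝ) := by
  obtain ⟨q, hq⟩ := h1
  obtain ⟨c, hc⟩ := h2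
  have hπ : (2 * π) ≠ 0 := by positivity
  have hφ : φ = 2 * π * q := by field_simp at hq; linarith
  -- z = exp(φ i) is a root of unity
  set z : ℂ := Complex.exp (φ * Complex.I) with hz
  have hb : (q.den : ℂ) * q = (q.num : ℂ) := by
    exact_mod_cast congrArg (Rat.cast (K := ℂ)) (Rat.den_mul_eq_num q)
  have hzpow : z ^ q.den = 1 := by
    rw [hz, ← Complex.exp_nat_mul]
    have : (q.den : ℂ) * (φ * Complex.I) = (q.num : ℂ) * (2 * π * Complex.I) := by
      rw [hφ]
      push_cast
      ring_nf
      rw [show ((q.den:ℂ) * ↑π * ↑q * Complex.I * 2 : ℂ) = ((q.den:ℂ) * ↑q) * (↑π * Complex.I * 2) by ring, hb]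
      ring
    rw [this, Complex.exp_int_mul_two_pi_mul_I]
  have hz0 : z ≠ 0 := Complex.exp_ne_zero _
  have hint : ∀ w : ℂ, w ^ q.den = 1 → IsIntegral ℤ w := by
    intro w hw
    refine ⟨Polynomial.X ^ q.den - 1, ?_, ?_⟩
    · simpa using Polynomial.monic_X_pow_sub_C (1 : ℤ) q.den_nz
    · simp [hw]
  have hzinv : z⁻¹ ^ q.den = 1 := by rw [inv_pow, hzpow, inv_one]
  have hsum : IsIntegral ℤ (z + z⁻¹) := (hint z hzpow).add (hint z⁻¹ hzinv)
  have hcos : z + z⁻¹ = ((2 * c : ℚ) : ℂ) := by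
    have h2 := Complex.two_cos (φ : ℂ)
    have hre : Complex.cos φ = (c : ℂ) := by
      rw [← Complex.ofReal_cos, hc]; push_cast; ring
    rw [hz, ← Complex.exp_neg, show (-((φ:ℂ) * Complex.I)) = (-(φ:ℂ) * Complex.I) by ring,
      ← h2, hre]
    push_cast; ring
  rw [hcos] at hsum
  have h2c : IsIntegral ℤ (2 * c : ℚ) := by
    rwa [show ((2 * c : ℚ) : ℂ) = algebraMap ℚ ℂ (2 * c) from rfl,
      isIntegral_algebraMap_iff (algebraMap ℚ ℂ).injective] at hsum
  obtain ⟨n, hn⟩ := IsIntegrallyClosed.isIntegral_iff.mp h2c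
  have hcle : |(c : ℝ)| ≤ 1 := by rw [← hc]; exact Real.abs_cos_le_one φ
  have hcle' : |c| ≤ 1 := by
    rwa [show |(c:ℝ)| = ((|c| : ℚ) : ℝ) by push_cast; rfl, show (1:ℝ) = ((1:ℚ):ℝ) by norm_num,
      Rat.cast_le] at hcle
  have hn' : (n : ℚ) = 2 * c := hn
  rw [abs_le] at hcle'
  have hq1 : ((-2 : ℤ) : ℚ) ≤ (n : ℚ) := by rw [hn']; push_cast; linarith
  have hq2 : ((n : ℤ) : ℚ) ≤ ((2 : ℤ) : ℚ) := by rw [hn']; push_cast; linarith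
  have hn1 : (-2 : ℤ) ≤ n := by exact_mod_cast hq1
  have hn2 : n ≤ 2 := by exact_mod_cast hq2
  have hcR : (c : ℝ) = (n : ℝ) / 2 := by
    have : c = (n : ℚ) / 2 := by rw [hn']; ring
    rw [this]; push_cast; ring
  rw [hc, hcR]
  simp only [Set.mem_insert_iff, Set.mem_singleton_iff]
  interval_cases n <;> norm_num
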